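/- Let Λ be a generalised Bratteli diagram of infinite depth and let x be an infinite path in Λ such that o(x(0, ne₁)) → ∞ as n → ∞. Then x is aperiodic: for all p, q ∈ ℕ², σ^p(x) = σ^q(x) implies p = q. -/

import Mathlib

open scoped ENNReal

/-- A rank-2 graph (`2`-graph): a countable category whose morphisms (paths) carry a
degree functor `d : Path → ℕ × ℕ` satisfying the unique factorisation property.
Vertices are identified with the paths of degree `(0,0)`; composition is a total
function whose behaviour is constrained only on composable pairs (`s p = r q`). -/
structure TwoGraph where
  Path : Type
  countable : Countable Path
  d : Path → ℕ × ℕ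
  r : Path → Path
  s : Path → Path
  comp : Path → Path → Path
  d_r : ∀ p, d (r p) = 0
  d_s : ∀ p, d (s p) = 0
  r_vertex : ∀ p, d p = 0 → r p = p
  s_vertex : ∀ p, d p = 0 → s p = p
  id_comp : ∀ p, comp (r p) p = p
  comp_id : ∀ p, comp p (s p) = p
  r_comp : ∀ p q, s p = r q → r (comp p q) = r p
  s_comp : ∀ p q, s p = r q → s (comp p q) = s q
  d_comp : ∀ p q, s p = r q → d (comp p q) = d p + d q
  comp_assoc : ∀ p q t, s p = r q → s q = r t → comp (comp p q) t = comp p (comp q t)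
  factor : ∀ (lam : Path) (m n : ℕ × ℕ), d lam = m + n →
    ∃! mn : Path × Path,
      d mn.1 = m ∧ d mn.2 = n ∧ s mn.1 = r mn.2 ∧ comp mn.1 mn.2 = lam

namespace TwoGraph

variable (G : TwoGraph)

/-- Vertices are the paths of degree `0`. -/
def IsVertex (p : G.Path) : Prop := G.d p = 0

/-- A blue path: one whose degree lies in `ℕ e₁`. -/
def IsBlue (p : G.Path) : Prop := (G.d p).2 = 0

/-- A red path: one whose degree lies in `ℕ e₂`. -/
def IsRed (p : G.Path) : Prop := (G.d p).1 = 0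

/-- A blue edge: a path of degree `e₁ = (1,0)`. -/
def IsBlueEdge (p : G.Path) : Prop := G.d p = (1, 0)

/-- A red edge: a path of degree `e₂ = (0,1)`. -/
def IsRedEdge (p : G.Path) : Prop := G.d p = (0, 1)

/-- `Λ` is row-finite: `vΛⁿ` is finite for every vertex `v` and degree `n`. -/
def RowFinite : Prop :=
  ∀ (v : G.Path) (n : ℕ × ℕ), G.IsVertex v →
    {p : G.Path | G.r p = v ∧ G.d p = n}.Finite

/-- `Λ` is a finite `2`-graph: `Λⁿ` is finite for every degree `n`. -/
def FinitePaths : Prop := ∀ n : ℕ × ℕ, {p : G.Path | G.d p = n}.Finite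

/-- `μ` is an initial segment of `lam`, i.e. `lam = μ ν` for some `ν`. -/
def InitSeg (μ lam : G.Path) : Prop := ∃ ν, G.s μ = G.r ν ∧ G.comp μ ν = lam

/-- `μ` is a final segment of `lam`, i.e. `lam = ν μ` for some `ν`. -/
def FinalSeg (μ lam : G.Path) : Prop := ∃ ν, G.s ν = G.r μ ∧ G.comp ν μ = lam

/-- The vertex `v` lies on the path `lam`, i.e. `v = lam(n)` for some `0 ≤ n ≤ d lam`. -/
def OnPath (lam v : G.Path) : Prop :=
  G.IsVertex v ∧ ∃ μ, G.InitSeg μ lam ∧ G.s μ = v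

/-- A cycle: `d lam ≠ 0`, `r lam = s lam`, and `lam(n) ≠ s lam` for `0 < n < d lam`. -/
def IsCycle (lam : G.Path) : Prop :=
  G.d lam ≠ 0 ∧ G.r lam = G.s lam ∧
    ∀ μ, G.InitSeg μ lam → G.d μ ≠ 0 → G.d μ ≠ G.d lam → G.s μ ≠ G.s lam

/-- `lam` has no entrance: for `n ≤ d lam`, every path of degree `n` with range `r lam`
is the initial segment `lam(0,n)`. -/
def HasNoEntrance (lam : G.Path) : Prop :=
  ∀ n : ℕ × ℕ, n ≤ G.d lam → ∀ μ, G.d μ = n → G.r μ = G.r lam → G.InitSeg μ lam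

/-- `lam` has no exit: for `n ≤ d lam`, every path of degree `n` with source `s lam`
is the final segment `lam(d lam - n, d lam)`. -/
def HasNoExit (lam : G.Path) : Prop :=
  ∀ n : ℕ × ℕ, n ≤ G.d lam → ∀ μ, G.d μ = n → G.s μ = G.s lam → G.FinalSeg μ lam

/-- An isolated cycle: no entrances and no exits. -/
def IsIsolated (lam : G.Path) : Prop := G.HasNoEntrance lam ∧ G.HasNoExit lam

/-- An isolated cycle in the red graph. -/
def IsIsolatedRedCycle (lam : G.Path) : Prop :=
  G.IsRed lam ∧ G.IsCycle lam ∧ G.IsIsolated lam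

/-- Condition (3.1): `Λ` is row-finite, the blue graph contains no cycles, and each
vertex is the range of an isolated cycle in the red graph. -/
def Cond31 : Prop :=
  G.RowFinite ∧ (∀ p, G.IsBlue p → ¬ G.IsCycle p) ∧
    ∀ v, G.IsVertex v → ∃ lam, G.IsIsolatedRedCycle lam ∧ G.r lam = v

/-- A source of the blue graph: a vertex receiving no blue edges. -/
def IsBlueSource (v : G.Path) : Prop :=
  G.IsVertex v ∧ ∀ e, G.IsBlueEdge e → G.r e ≠ v

/-- A sink of the blue graph: a vertex emitting no blue edges. -/
def IsBlueSink (v : G.Path) : Prop :=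
  G.IsVertex v ∧ ∀ e, G.IsBlueEdge e → G.s e ≠ v

/-- `Λ^{≤ n}`. -/
def LeSet (n : ℕ × ℕ) : Set G.Path :=
  {lam | G.d lam ≤ n ∧
    ∀ μ, G.s lam = G.r μ → G.comp lam μ ≠ lam → ¬ G.d (G.comp lam μ) ≤ n}

/-- `IsSwap ρ τ τ' ρ'` says that `(τ', ρ') = 𝓕(ρ, τ)` is the factorisation of `ρτ`
with the degrees in the reversed order: `τ'ρ' = ρτ`, `d τ' = d τ` and `d ρ' = d ρ`. -/
def IsSwap (ρ τ τ' ρ' : G.Path) : Prop :=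
  G.s ρ = G.r τ ∧ G.s τ' = G.r ρ' ∧ G.d τ' = G.d τ ∧ G.d ρ' = G.d ρ ∧
    G.comp τ' ρ' = G.comp ρ τ

/-- The edge `e` occurs at position `n` in the red path `μ`. -/
def OccAt (μ e : G.Path) (n : ℕ) : Prop :=
  ∃ ρ ξ, G.d ρ = (0, n) ∧ G.s ρ = G.r e ∧ G.s e = G.r ξ ∧
    G.comp ρ (G.comp e ξ) = μ

/-- `⟨μ, e⟩`: the number of occurrences of the red edge `e` in the red path `μ`. -/
noncomputable def occCount (μ e : G.Path) : ℕ :=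
  Nat.card {n : ℕ // G.OccAt μ e n}

/-- Membership in `Y = (blue Λ)S`: a blue path whose source is a source of the
blue graph. -/
def InY (α : G.Path) : Prop := G.IsBlue α ∧ G.IsBlueSource (G.s α)

/-- One step of the factorisation permutation `𝓕` of the blue paths of a GBD:
`α' = 𝓕(α)` iff `f α = α' f'` for (the) red edges `f, f'` with `s f = r α`. -/
def FStep (α α' : G.Path) : Prop :=
  G.IsBlue α ∧ G.IsBlue α' ∧
    ∃ f f', G.IsRedEdge f ∧ G.IsRedEdge f' ∧ G.s f = G.r α ∧ G.s α' = G.r f' ∧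
      G.comp f α = G.comp α' f'

end TwoGraph

/-- `k`-fold iteration of the factorisation permutation, as a relation. -/
def TwoGraph.FIter (G : TwoGraph) : ℕ → G.Path → G.Path → Prop
  | 0, α, α' => α = α'
  | k + 1, α, α' => ∃ β, G.FStep α β ∧ TwoGraph.FIter G k β α'

namespace TwoGraph

variable (G : TwoGraph)

/-- `o(α) = k`: `k` is the order of the blue path `α` under the factorisation
permutation `𝓕`. -/
def HasOrder (α : G.Path) (k : ℕ) : Prop :=
  0 < k ∧ G.FIter k α α ∧ ∀ m, 0 < m → m < k → ¬ G.FIter m α α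

end TwoGraph

/-- `IsChainComp [e₁, …, eₙ] β` says `β = e₁ e₂ ⋯ eₙ`. -/
def TwoGraph.IsChainComp (G : TwoGraph) : List G.Path → G.Path → Prop
  | [], β => G.IsVertex β
  | e :: l, β => ∃ γ, TwoGraph.IsChainComp G l γ ∧ G.s e = G.r γ ∧ β = G.comp e γ

/-- `cyclePow lam m = lam^m`, the `m`-fold concatenation of the cycle `lam`,
with `lam^0 = s lam`. -/
def TwoGraph.cyclePow (G : TwoGraph) (lam : G.Path) : ℕ → G.Path
  | 0 => G.s lam
  | m + 1 => G.comp lam (TwoGraph.cyclePow G lam m)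

namespace TwoGraph

variable (G : TwoGraph)

/-! ### Relative (sub-2-graph) versions of the basic notions -/

/-- `μ` is an initial segment of `lam` within `P`. -/
def InitSegIn (P : Set G.Path) (μ lam : G.Path) : Prop :=
  ∃ ν ∈ P, G.s μ = G.r ν ∧ G.comp μ ν = lam

/-- `μ` is a final segment of `lam` within `P`. -/
def FinalSegIn (P : Set G.Path) (μ lam : G.Path) : Prop :=
  ∃ ν ∈ P, G.s ν = G.r μ ∧ G.comp ν μ = lam

/-- A cycle of the sub-2-graph with path-set `P`. -/
def IsCycleIn (P : Set G.Path) (lam : G.Path) : Prop :=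
  lam ∈ P ∧ G.d lam ≠ 0 ∧ G.r lam = G.s lam ∧
    ∀ μ ∈ P, G.InitSegIn P μ lam → G.d μ ≠ 0 → G.d μ ≠ G.d lam → G.s μ ≠ G.s lam

def HasNoEntranceIn (P : Set G.Path) (lam : G.Path) : Prop :=
  ∀ n : ℕ × ℕ, n ≤ G.d lam → ∀ μ ∈ P, G.d μ = n → G.r μ = G.r lam → G.InitSegIn P μ lam

def HasNoExitIn (P : Set G.Path) (lam : G.Path) : Prop :=
  ∀ n : ℕ × ℕ, n ≤ G.d lam → ∀ μ ∈ P, G.d μ = n → G.s μ = G.s lam → G.FinalSegIn P μ lam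

/-- An isolated cycle of the red graph of the sub-2-graph with path-set `P`. -/
def IsIsolatedRedCycleIn (P : Set G.Path) (lam : G.Path) : Prop :=
  lam ∈ P ∧ G.IsRed lam ∧ G.IsCycleIn P lam ∧
    G.HasNoEntranceIn P lam ∧ G.HasNoExitIn P lam

def RowFiniteIn (P : Set G.Path) : Prop :=
  ∀ (v : G.Path) (n : ℕ × ℕ), G.IsVertex v →
    {p : G.Path | p ∈ P ∧ G.r p = v ∧ G.d p = n}.Finite

/-- A source of the blue graph of the sub-2-graph with path-set `P`. -/
def IsBlueSourceIn (P : Set G.Path) (v : G.Path) : Prop :=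
  v ∈ P ∧ G.IsVertex v ∧ ∀ e ∈ P, G.IsBlueEdge e → G.r e ≠ v

/-- Condition (3.1) for the sub-2-graph with path-set `P`. -/
def Cond31In (P : Set G.Path) : Prop :=
  G.RowFiniteIn P ∧ (∀ p ∈ P, G.IsBlue p → ¬ G.IsCycleIn P p) ∧
    ∀ v ∈ P, G.IsVertex v → ∃ lam, G.IsIsolatedRedCycleIn P lam ∧ G.r lam = v

/-- `Λ_j = {λ ∈ Λ : s(λ) Λ W ≠ ∅}`: the paths admitting a path from their source
into the vertex set `W`. -/
def subGraphTo (W : Set G.Path) : Set G.Path :=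
  {p | ∃ μ, G.r μ = G.s p ∧ G.s μ ∈ W}

/-- `Λ` has large-permutation factorisations. -/
def HasLPF : Prop :=
  ∀ v, G.IsVertex v → ∀ l : ℕ, 0 < l → ∃ N : ℕ,
    ∀ α, G.IsBlue α → G.r α = v → G.d α = (N, 0) →
      ∀ k, G.HasOrder α k → l < k

end TwoGraph

/-- A generalised Bratteli diagram of depth `N ∈ ℕ ∪ {∞}` with vertex decomposition
`Λ⁰ = ⊔ₙ V n`. -/
structure IsGBD (G : TwoGraph) (N : ℕ∞) (V : ℕ → Set G.Path) : Prop where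
  rowFinite : G.RowFinite
  level_nonempty : ∀ n : ℕ, (n : ℕ∞) ≤ N → (V n).Nonempty
  level_finite : ∀ n : ℕ, (V n).Finite
  level_empty : ∀ n : ℕ, ¬ ((n : ℕ∞) ≤ N) → V n = ∅
  level_vertex : ∀ n, V n ⊆ {v | G.IsVertex v}
  cover : ∀ v, G.IsVertex v → ∃ n, v ∈ V n
  level_disjoint : ∀ m n, m ≠ n → Disjoint (V m) (V n)
  blue_level : ∀ e, G.IsBlueEdge e → ∃ n, G.r e ∈ V n ∧ G.s e ∈ V (n + 1)
  sinks_bottom : ∀ v, G.IsBlueSink v → v ∈ V 0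
  sources_top : ∀ v, G.IsBlueSource v → ∃ n : ℕ, (n : ℕ∞) = N ∧ v ∈ V n
  red_cycle : ∀ v, G.IsVertex v → ∃ lam, G.IsIsolatedRedCycle lam ∧ G.r lam = v
  red_level : ∀ f, G.IsRedEdge f → ∃ n, G.r f ∈ V n ∧ G.s f ∈ V n

/-- The sub-2-graph `Λ_N` of paths joining vertices in the first `N` levels. -/
def levelPaths (G : TwoGraph) (V : ℕ → Set G.Path) (N : ℕ) : Set G.Path :=
  {p | (∃ n ≤ N, G.r p ∈ V n) ∧ (∃ n ≤ N, G.s p ∈ V n)}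

/-- An infinite path in a 2-graph: a degree-preserving functor `Ω₂ → Λ`, recorded by
its segments `x(m,n)` for `m ≤ n` in `ℕ × ℕ`. -/
structure InfPath (G : TwoGraph) where
  seg : ℕ × ℕ → ℕ × ℕ → G.Path
  deg : ∀ m n : ℕ × ℕ, m ≤ n → G.d (seg m n) = n - m
  range_seg : ∀ m n : ℕ × ℕ, m ≤ n → G.r (seg m n) = seg m m
  source_seg : ∀ m n : ℕ × ℕ, m ≤ n → G.s (seg m n) = seg n n
  comp_seg : ∀ m n p : ℕ × ℕ, m ≤ n → n ≤ p → G.comp (seg m n) (seg n p) = seg m p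

/-- A Cuntz–Krieger `Λ`-family in a C*-algebra `A`. -/
structure CKFamily (G : TwoGraph) (A : Type*) [CStarAlgebra A] where
  S : G.Path → A
  ck1_sa : ∀ v, G.IsVertex v → star (S v) = S v
  ck1_idem : ∀ v, G.IsVertex v → S v * S v = S v
  ck1_orth : ∀ v w, G.IsVertex v → G.IsVertex w → v ≠ w → S v * S w = 0
  ck2 : ∀ p q, G.s p = G.r q → S p * S q = S (G.comp p q)
  ck3 : ∀ p, star (S p) * S p = S (G.s p)
  ck4 : ∀ (v : G.Path) (n : ℕ × ℕ), G.IsVertex v →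
    S v = ∑ᶠ lam ∈ {lam : G.Path | lam ∈ G.LeSet n ∧ G.r lam = v},
      S lam * star (S lam)

section CStar

variable {A : Type*} [CStarAlgebra A]

/-- The C*-subalgebra (as a subset) of `A` generated by a set `SS`. -/
def generatedCStar (SS : Set A) : Set A :=
  closure (NonUnitalStarAlgebra.adjoin ℂ SS : Set A)

/-- `P` is full in the C*-algebra `Bset ⊆ A`: every closed two-sided ideal of `Bset`
containing `P` is all of `Bset`. -/
def FullIn (Bset : Set A) (P : A) : Prop :=
  ∀ I : Set A, I ⊆ Bset → IsClosed I →
    (∀ x ∈ I, ∀ y ∈ I, x + y ∈ I) → (∀ (c : ℂ), ∀ x ∈ I, c • x ∈ I) →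
    (∀ a ∈ Bset, ∀ x ∈ I, a * x ∈ I ∧ x * a ∈ I) →
    P ∈ I → Bset ⊆ I

/-- The sum `∑_{v ∈ Λ⁰} s_v`, which is the unit of `C*(Λ)` for finite `Λ`. -/
noncomputable def ckUnit (G : TwoGraph) (F : CKFamily G A) : A :=
  ∑ᶠ v ∈ {v : G.Path | G.IsVertex v}, F.S v

/-- The canonical unitary `U = ∑_{α ∈ Y} s_α s_{λ(α)} s_α*`. -/
noncomputable def ckU (G : TwoGraph) (F : CKFamily G A) (lam : G.Path → G.Path) : A :=
  ∑ᶠ α ∈ {α : G.Path | G.InY α}, F.S α * F.S (lam α) * star (F.S α)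

/-- The gauge action: for every `z ∈ 𝕋²` there is a *-automorphism `γ_z` of the
C*-subalgebra generated by the family with `γ_z(s_λ) = z^{d(λ)} s_λ`. -/
def GaugeInvariant (G : TwoGraph) (F : CKFamily G A) : Prop :=
  ∀ z₁ z₂ : ℂ, ‖z₁‖ = 1 → ‖z₂‖ = 1 → ∃ γ : A → A,
    Set.BijOn γ (generatedCStar (Set.range F.S)) (generatedCStar (Set.range F.S)) ∧
    (∀ x ∈ generatedCStar (Set.range F.S), ∀ y ∈ generatedCStar (Set.range F.S),
      γ (x + y) = γ x + γ y ∧ γ (x * y) = γ x * γ y) ∧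
    (∀ x ∈ generatedCStar (Set.range F.S), γ (star x) = star (γ x)) ∧
    (∀ (c : ℂ), ∀ x ∈ generatedCStar (Set.range F.S), γ (c • x) = c • γ x) ∧
    (∀ p : G.Path, γ (F.S p) = (z₁ ^ (G.d p).1 * z₂ ^ (G.d p).2) • F.S p)

end CStar

section AuxStmt14

namespace TwoGraph

variable {G : TwoGraph} {V : ℕ → Set G.Path}

lemma isVertex_r' (p : G.Path) : G.IsVertex (G.r p) := G.d_r p
lemma isVertex_s' (p : G.Path) : G.IsVertex (G.s p) := G.d_s p

lemma factor_eq {lam a b a' b' : G.Path} {m n : ℕ × ℕ} (h : G.d lam = m + n)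
    (ha : G.d a = m) (hb : G.d b = n) (hs : G.s a = G.r b) (hc : G.comp a b = lam)
    (ha' : G.d a' = m) (hb' : G.d b' = n) (hs' : G.s a' = G.r b') (hc' : G.comp a' b' = lam) :
    a = a' ∧ b = b' := by
  obtain ⟨mn, -, hu⟩ := G.factor lam m n h
  have e1 := hu (a, b) ⟨ha, hb, hs, hc⟩
  have e2 := hu (a', b') ⟨ha', hb', hs', hc'⟩
  have e := e1.trans e2.symm
  exact ⟨congrArg Prod.fst e, congrArg Prod.snd e⟩

/-- Existence and uniqueness of the red edge out of (i.e. into the range-) a vertex: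
`s f = v`. -/
lemma red_out (hGBD : IsGBD G ⊤ V) {v : G.Path} (hv : G.IsVertex v) :
    ∃ f, G.IsRedEdge f ∧ G.s f = v ∧ ∀ f', G.IsRedEdge f' → G.s f' = v → f' = f := by
  obtain ⟨lam, ⟨hred, hcyc, hiso⟩, hr⟩ := hGBD.red_cycle v hv
  obtain ⟨hd0, hrs, -⟩ := hcyc
  have hslam : G.s lam = v := hrs ▸ hr
  have h1 : (G.d lam).1 = 0 := hred
  have h2 : (G.d lam).2 ≠ 0 := fun h => hd0 (Prod.ext h1 h)
  have hle : ((0, 1) : ℕ × ℕ) ≤ G.d lam := Prod.le_def.mpr ⟨by omega, by omega⟩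
  have hfac : G.d lam = (0, (G.d lam).2 - 1) + (0, 1) :=
    Prod.ext (by simpa using h1) (by simp; omega)
  obtain ⟨⟨ν, f⟩, ⟨hdν, hdf, hsν, hcomp⟩, -⟩ := G.factor lam (0, (G.d lam).2 - 1) (0, 1) hfac
  dsimp only at hdν hdf hsν hcomp
  have hsf : G.s f = v := by
    have h := G.s_comp ν f hsν
    rw [hcomp] at h
    exact h ▸ hslam
  refine ⟨f, hdf, hsf, ?_⟩
  intro f' hf' hsf'
  obtain ⟨ν', hsν', hcomp'⟩ := hiso.2 (0, 1) hle f' hf' (by rw [hsf', ← hslam])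
  have hdν' : G.d ν' = (0, (G.d lam).2 - 1) := by
    have h := G.d_comp ν' f' hsν'
    rw [hcomp', hf'] at h
    have ha := congrArg Prod.fst h
    have hb := congrArg Prod.snd h
    simp at ha hb
    exact Prod.ext (by simp; omega) (by simp; omega)
  exact (factor_eq hfac hdν' hf' hsν' hcomp' hdν hdf hsν hcomp).2

/-- Existence and uniqueness of the red edge into a vertex: `r f = v`. -/
lemma red_in (hGBD : IsGBD G ⊤ V) {v : G.Path} (hv : G.IsVertex v) :
    ∃ f, G.IsRedEdge f ∧ G.r f = v ∧ ∀ f', G.IsRedEdge f' → G.r f' = v → f' = f := by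
  obtain ⟨lam, ⟨hred, hcyc, hiso⟩, hr⟩ := hGBD.red_cycle v hv
  obtain ⟨hd0, hrs, -⟩ := hcyc
  have h1 : (G.d lam).1 = 0 := hred
  have h2 : (G.d lam).2 ≠ 0 := fun h => hd0 (Prod.ext h1 h)
  have hle : ((0, 1) : ℕ × ℕ) ≤ G.d lam := Prod.le_def.mpr ⟨by omega, by omega⟩
  have hfac : G.d lam = (0, 1) + (0, (G.d lam).2 - 1) :=
    Prod.ext (by simpa using h1) (by simp; omega)
  obtain ⟨⟨f, ν⟩, ⟨hdf, hdν, hsf, hcomp⟩, -⟩ := G.factor lam (0, 1) (0, (G.d lam).2 - 1) hfac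
  dsimp only at hdf hdν hsf hcomp
  have hrf : G.r f = v := by
    have h := G.r_comp f ν hsf
    rw [hcomp] at h
    exact h ▸ hr
  refine ⟨f, hdf, hrf, ?_⟩
  intro f' hf' hrf'
  obtain ⟨ν', hsν', hcomp'⟩ := hiso.1 (0, 1) hle f' hf' (by rw [hrf', ← hr])
  have hdν' : G.d ν' = (0, (G.d lam).2 - 1) := by
    have h := G.d_comp f' ν' hsν'
    rw [hcomp', hf'] at h
    have ha := congrArg Prod.fst h
    have hb := congrArg Prod.snd h
    simp at ha hb
    exact Prod.ext (by simp; omega) (by simp; omega)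
  exact (factor_eq hfac hf' hdν' hsν' hcomp' hdf hdν hsf hcomp).1

lemma FStep_total (hGBD : IsGBD G ⊤ V) {α : G.Path} (hb : G.IsBlue α) :
    ∃ β, G.FStep α β := by
  obtain ⟨f, hf, hsf, -⟩ := red_out hGBD (isVertex_r' α)
  have hd : G.d (G.comp f α) = G.d α + (0, 1) := by
    rw [G.d_comp f α hsf, hf, add_comm]
  obtain ⟨⟨β, f'⟩, ⟨hdβ, hdf', hsβ, hcomp⟩, -⟩ := G.factor (G.comp f α) (G.d α) (0, 1) hd
  dsimp only at hdβ hdf' hsβ hcomp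
  exact ⟨β, hb, show (G.d β).2 = 0 by rw [hdβ]; exact hb,
    f, f', hf, hdf', hsf, hsβ, hcomp.symm⟩

lemma FStep_det (hGBD : IsGBD G ⊤ V) {α β₁ β₂ : G.Path}
    (h1 : G.FStep α β₁) (h2 : G.FStep α β₂) : β₁ = β₂ := by
  obtain ⟨hbα, hbβ₁, f₁, f₁', hf₁, hf₁', hsf₁, hsβ₁, hc₁⟩ := h1
  obtain ⟨-, hbβ₂, f₂, f₂', hf₂, hf₂', hsf₂, hsβ₂, hc₂⟩ := h2
  obtain ⟨f, hf, hsf, huniq⟩ := red_out hGBD (isVertex_r' α)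
  rw [huniq f₁ hf₁ hsf₁] at hc₁
  rw [huniq f₂ hf₂ hsf₂] at hc₂
  have hd : G.d (G.comp f α) = G.d α + (0, 1) := by
    rw [G.d_comp f α hsf, hf, add_comm]
  have hdβ₁ : G.d β₁ = G.d α := by
    have h := congrArg G.d hc₁
    rw [G.d_comp f α hsf, G.d_comp β₁ f₁' hsβ₁, hf, hf₁'] at h
    have ha := congrArg Prod.fst h; have hb := congrArg Prod.snd h
    simp at ha hb
    exact Prod.ext (by omega) (by omega)
  have hdβ₂ : G.d β₂ = G.d α := by
    have h := congrArg G.d hc₂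
    rw [G.d_comp f α hsf, G.d_comp β₂ f₂' hsβ₂, hf, hf₂'] at h
    have ha := congrArg Prod.fst h; have hb := congrArg Prod.snd h
    simp at ha hb
    exact Prod.ext (by omega) (by omega)
  exact (factor_eq hd hdβ₁ hf₁' hsβ₁ hc₁.symm hdβ₂ hf₂' hsβ₂ hc₂.symm).1

lemma FStep_inj (hGBD : IsGBD G ⊤ V) {α₁ α₂ β : G.Path}
    (h1 : G.FStep α₁ β) (h2 : G.FStep α₂ β) : α₁ = α₂ := by
  obtain ⟨hbα₁, hbβ, f₁, f₁', hf₁, hf₁', hsf₁, hsβ₁, hc₁⟩ := h1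
  obtain ⟨hbα₂, -, f₂, f₂', hf₂, hf₂', hsf₂, hsβ₂, hc₂⟩ := h2
  obtain ⟨f', hf', hrf', huniq'⟩ := red_in hGBD (isVertex_s' β)
  rw [huniq' f₁' hf₁' hsβ₁.symm] at hc₁ hsβ₁
  rw [huniq' f₂' hf₂' hsβ₂.symm] at hc₂
  have hcc : G.comp f₁ α₁ = G.comp f₂ α₂ := by rw [hc₁, hc₂]
  have hr12 : G.r f₁ = G.r f₂ := by
    have a1 := G.r_comp f₁ α₁ hsf₁
    have a2 := G.r_comp f₂ α₂ hsf₂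
    rw [hcc] at a1
    exact a1.symm.trans a2
  obtain ⟨g, hg, hrg, huniqg⟩ := red_in hGBD (isVertex_r' f₁)
  have e1 : f₁ = g := huniqg f₁ hf₁ rfl
  have e2 : f₂ = g := huniqg f₂ hf₂ hr12.symm
  rw [e1] at hc₁ hsf₁
  rw [e2] at hc₂ hsf₂
  have hcc' : G.comp g α₁ = G.comp g α₂ := by rw [hc₁, hc₂]
  have hd : G.d (G.comp g α₁) = (0, 1) + G.d α₁ := by
    rw [G.d_comp g α₁ hsf₁, hg]
  have hdα : G.d α₂ = G.d α₁ := by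
    have h := congrArg G.d hcc'
    rw [G.d_comp g α₁ hsf₁, G.d_comp g α₂ hsf₂] at h
    have ha := congrArg Prod.fst h; have hb := congrArg Prod.snd h
    simp at ha hb
    exact Prod.ext (by omega) (by omega)
  exact (factor_eq hd hg rfl hsf₁ rfl hg hdα hsf₂ hcc'.symm).2

lemma FIter_comp : ∀ (a : ℕ) {b : ℕ} {α β γ : G.Path},
    G.FIter a α β → G.FIter b β γ → G.FIter (a + b) α γ
  | 0, b, α, β, γ, h1, h2 => by rw [Nat.zero_add]; rwa [show α = β from h1]
  | a + 1, b, α, β, γ, h1, h2 => by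
      obtain ⟨m, hs, hi⟩ := h1
      rw [Nat.succ_add]
      exact ⟨m, hs, FIter_comp a hi h2⟩

lemma FIter_split : ∀ (a : ℕ) {b : ℕ} {α γ : G.Path},
    G.FIter (a + b) α γ → ∃ β, G.FIter a α β ∧ G.FIter b β γ
  | 0, b, α, γ, h => ⟨α, rfl, by rwa [Nat.zero_add] at h⟩
  | a + 1, b, α, γ, h => by
      rw [Nat.succ_add] at h
      obtain ⟨m, hs, hi⟩ := h
      obtain ⟨β, hb1, hb2⟩ := FIter_split a hi
      exact ⟨β, ⟨m, hs, hb1⟩, hb2⟩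

lemma FIter_det (hGBD : IsGBD G ⊤ V) : ∀ (k : ℕ) {α β β' : G.Path},
    G.FIter k α β → G.FIter k α β' → β = β'
  | 0, α, β, β', h1, h2 => h1.symm.trans h2
  | k + 1, α, β, β', h1, h2 => by
      obtain ⟨m, hs, hi⟩ := h1
      obtain ⟨m', hs', hi'⟩ := h2
      rw [FStep_det hGBD hs hs'] at hi
      exact FIter_det hGBD k hi hi'

lemma FIter_inj (hGBD : IsGBD G ⊤ V) : ∀ (k : ℕ) {α α' β : G.Path},
    G.FIter k α β → G.FIter k α' β → α = α'
  | 0, α, α', β, h1, h2 => h1.trans h2.symm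
  | k + 1, α, α', β, h1, h2 => by
      obtain ⟨m, hs, hi⟩ := h1
      obtain ⟨m', hs', hi'⟩ := h2
      rw [FIter_inj hGBD k hi hi'] at hs
      exact FStep_inj hGBD hs hs'

lemma FIter_total (hGBD : IsGBD G ⊤ V) {α : G.Path} (hb : G.IsBlue α) :
    ∀ k, ∃ β, G.IsBlue β ∧ G.FIter k α β
  | 0 => ⟨α, hb, rfl⟩
  | k + 1 => by
      obtain ⟨β, hbβ, hi⟩ := FIter_total hGBD hb k
      obtain ⟨γ, hsγ⟩ := FStep_total hGBD hbβ
      exact ⟨γ, hsγ.2.1, FIter_comp k hi ⟨γ, hsγ, rfl⟩⟩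

lemma FIter_mul {γ : G.Path} {r : ℕ} (h : G.FIter r γ γ) : ∀ i, G.FIter (i * r) γ γ
  | 0 => by rw [Nat.zero_mul]; rfl
  | i + 1 => by rw [Nat.succ_mul]; exact FIter_comp _ (FIter_mul h i) h

lemma FStep_tail (hGBD : IsGBD G ⊤ V) {δ γ β : G.Path}
    (hbδ : G.IsBlue δ) (hbγ : G.IsBlue γ) (hsr : G.s δ = G.r γ)
    (hstep : G.FStep (G.comp δ γ) β) :
    ∃ δ' γ', G.d δ' = G.d δ ∧ G.s δ' = G.r γ' ∧ β = G.comp δ' γ' ∧ G.FStep γ γ' := by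
  obtain ⟨hbα, hbβ, f, f', hf, hf', hsf, hsβ, hcomp⟩ := hstep
  have hrδ : G.s f = G.r δ := by rw [hsf, G.r_comp δ γ hsr]
  have hdβ : G.d β = G.d δ + G.d γ := by
    have h := congrArg G.d hcomp
    rw [G.d_comp f _ hsf, G.d_comp β f' hsβ, G.d_comp δ γ hsr, hf, hf'] at h
    have ha := congrArg Prod.fst h; have hb := congrArg Prod.snd h
    simp at ha hb
    exact Prod.ext (by simp; omega) (by simp; omega)
  obtain ⟨⟨δ', γ''⟩, ⟨hdδ', hdγ'', hs1, hc1⟩, -⟩ := G.factor β (G.d δ) (G.d γ) hdβ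
  dsimp only at hdδ' hdγ'' hs1 hc1
  have hdfδ : G.d (G.comp f δ) = G.d δ + (0, 1) := by
    rw [G.d_comp f δ hrδ, hf, add_comm]
  obtain ⟨⟨δ₂, f₂⟩, ⟨hdδ₂, hdf₂, hs2, hc2⟩, -⟩ := G.factor (G.comp f δ) (G.d δ) (0, 1) hdfδ
  dsimp only at hdδ₂ hdf₂ hs2 hc2
  have hsf₂ : G.s f₂ = G.r γ := by
    have a := G.s_comp δ₂ f₂ hs2
    rw [hc2, G.s_comp f δ hrδ] at a
    rw [← a]; exact hsr
  have hsγ'' : G.s γ'' = G.r f' := by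
    have a := G.s_comp δ' γ'' hs1
    rw [hc1] at a
    exact a.symm.trans hsβ
  have hdΘ : G.d (G.comp f (G.comp δ γ)) = G.d δ + (G.d γ + (0, 1)) := by
    rw [G.d_comp f _ hsf, G.d_comp δ γ hsr, hf]
    abel
  have hA4 : G.comp δ' (G.comp γ'' f') = G.comp f (G.comp δ γ) := by
    rw [← G.comp_assoc δ' γ'' f' hs1 hsγ'', hc1, hcomp]
  have hB4 : G.comp δ₂ (G.comp f₂ γ) = G.comp f (G.comp δ γ) := by
    rw [← G.comp_assoc δ₂ f₂ γ hs2 hsf₂, hc2, G.comp_assoc f δ γ hrδ hsr]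
  have hA2 : G.d (G.comp γ'' f') = G.d γ + (0, 1) := by
    rw [G.d_comp γ'' f' hsγ'', hdγ'', hf']
  have hB2 : G.d (G.comp f₂ γ) = G.d γ + (0, 1) := by
    rw [G.d_comp f₂ γ hsf₂, hdf₂, add_comm]
  have hA3 : G.s δ' = G.r (G.comp γ'' f') := by rw [G.r_comp γ'' f' hsγ'']; exact hs1
  have hB3 : G.s δ₂ = G.r (G.comp f₂ γ) := by rw [G.r_comp f₂ γ hsf₂]; exact hs2
  have heq := factor_eq hdΘ hdδ' hA2 hA3 hA4 hdδ₂ hB2 hB3 hB4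
  refine ⟨δ', γ'', hdδ', hs1, hc1.symm,
    hbγ, show (G.d γ'').2 = 0 by rw [hdγ'']; exact hbγ,
    f₂, f', hdf₂, hf', hsf₂, hsγ'', heq.2.symm⟩

lemma FIter_tail (hGBD : IsGBD G ⊤ V) :
    ∀ (k : ℕ) {δ γ ρ : G.Path}, G.IsBlue δ → G.IsBlue γ → G.s δ = G.r γ →
    G.FIter k (G.comp δ γ) ρ →
    ∃ δ' γ', G.d δ' = G.d δ ∧ G.s δ' = G.r γ' ∧ ρ = G.comp δ' γ' ∧ G.FIter k γ γ'
  | 0, δ, γ, ρ, hbδ, hbγ, hsr, h => ⟨δ, γ, rfl, hsr, h.symm, rfl⟩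
  | k + 1, δ, γ, ρ, hbδ, hbγ, hsr, h => by
      obtain ⟨β, hs, hi⟩ := h
      obtain ⟨δ₁, γ₁, hd₁, hs₁, hβ, hstep⟩ := FStep_tail hGBD hbδ hbγ hsr hs
      have hbδ₁ : G.IsBlue δ₁ := show (G.d δ₁).2 = 0 by rw [hd₁]; exact hbδ
      have hbγ₁ : G.IsBlue γ₁ := hstep.2.1
      rw [hβ] at hi
      obtain ⟨δ', γ', hd', hs', hρ, hit⟩ := FIter_tail hGBD k hbδ₁ hbγ₁ hs₁ hi
      exact ⟨δ', γ', hd'.trans hd₁, hs', hρ, ⟨γ₁, hstep, hit⟩⟩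

lemma level_unique (hGBD : IsGBD G ⊤ V) {v : G.Path} {a b : ℕ}
    (ha : v ∈ V a) (hb : v ∈ V b) : a = b := by
  by_contra h
  exact Set.disjoint_left.mp (hGBD.level_disjoint a b h) ha hb

lemma blue_source_level (hGBD : IsGBD G ⊤ V) :
    ∀ (a : ℕ) (δ : G.Path) (m : ℕ), G.d δ = (a, 0) → G.r δ ∈ V m → G.s δ ∈ V (m + a)
  | 0, δ, m, hd, hr => by
      have hv : G.IsVertex δ := hd
      rw [G.s_vertex δ hv, ← G.r_vertex δ hv]
      simpa using hr
  | a + 1, δ, m, hd, hr => by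
      have hfac : G.d δ = (1, 0) + (a, 0) := by
        rw [hd]; exact Prod.ext (by simp; omega) (by simp)
      obtain ⟨⟨e, δ'⟩, ⟨hde, hdδ', hse, hce⟩, -⟩ := G.factor δ (1, 0) (a, 0) hfac
      dsimp only at hde hdδ' hse hce
      have h1 := G.r_comp e δ' hse
      rw [hce] at h1
      have hre : G.r e ∈ V m := h1 ▸ hr
      obtain ⟨n0, hn0r, hn0s⟩ := hGBD.blue_level e hde
      have hn0 : n0 = m := level_unique hGBD hn0r hre
      subst hn0
      have hδ'r : G.r δ' ∈ V (n0 + 1) := by rw [← hse]; exact hn0s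
      have hres := blue_source_level hGBD a δ' (n0 + 1) hdδ' hδ'r
      have hs : G.s δ = G.s δ' := by
        have h := G.s_comp e δ' hse
        rw [hce] at h
        exact h
      rw [hs]
      have harr : n0 + 1 + a = n0 + (a + 1) := by omega
      rw [← harr]; exact hres

lemma seg_le {a b c d : ℕ} (h1 : a ≤ c) (h2 : b ≤ d) : ((a, b) : ℕ × ℕ) ≤ (c, d) :=
  Prod.mk_le_mk.mpr ⟨h1, h2⟩

lemma seg_deg (x : InfPath G) {a b c d : ℕ} (h1 : a ≤ c) (h2 : b ≤ d) :
    G.d (x.seg (a, b) (c, d)) = (c - a, d - b) := x.deg (a, b) (c, d) (seg_le h1 h2)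

lemma seg_vertex (x : InfPath G) (m : ℕ × ℕ) : G.IsVertex (x.seg m m) := by
  have h := x.deg m m le_rfl
  show G.d _ = 0
  rw [h]
  exact Prod.ext (Nat.sub_self m.1) (Nat.sub_self m.2)

lemma x_red_edge (x : InfPath G) (a b : ℕ) : G.IsRedEdge (x.seg (a, b) (a, b + 1)) := by
  show G.d _ = (0, 1)
  rw [seg_deg x (le_refl a) (Nat.le_succ b)]
  exact Prod.ext (Nat.sub_self a) (by simp)

lemma x_blue_edge (x : InfPath G) (a b : ℕ) : G.IsBlueEdge (x.seg (a, b) (a + 1, b)) := by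
  show G.d _ = (1, 0)
  rw [seg_deg x (Nat.le_succ a) (le_refl b)]
  exact Prod.ext (by simp) (Nat.sub_self b)

lemma x_level_red (hGBD : IsGBD G ⊤ V) (x : InfPath G) {ℓ a b : ℕ}
    (h : x.seg (a, b) (a, b) ∈ V ℓ) : x.seg (a, b + 1) (a, b + 1) ∈ V ℓ := by
  obtain ⟨n, hnr, hns⟩ := hGBD.red_level _ (x_red_edge x a b)
  rw [x.range_seg _ _ (seg_le (le_refl a) (Nat.le_succ b))] at hnr
  rw [x.source_seg _ _ (seg_le (le_refl a) (Nat.le_succ b))] at hns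
  rwa [level_unique hGBD hnr h] at hns

lemma x_level_blue (hGBD : IsGBD G ⊤ V) (x : InfPath G) {ℓ a b : ℕ}
    (h : x.seg (a, b) (a, b) ∈ V ℓ) : x.seg (a + 1, b) (a + 1, b) ∈ V (ℓ + 1) := by
  obtain ⟨n, hnr, hns⟩ := hGBD.blue_level _ (x_blue_edge x a b)
  rw [x.range_seg _ _ (seg_le (Nat.le_succ a) (le_refl b))] at hnr
  rw [x.source_seg _ _ (seg_le (Nat.le_succ a) (le_refl b))] at hns
  rwa [level_unique hGBD hnr h] at hns

lemma x_level (hGBD : IsGBD G ⊤ V) (x : InfPath G) {ℓ0 : ℕ}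
    (h0 : x.seg 0 0 ∈ V ℓ0) : ∀ a b : ℕ, x.seg (a, b) (a, b) ∈ V (ℓ0 + a) := by
  have hrow : ∀ b : ℕ, x.seg (0, b) (0, b) ∈ V ℓ0 := by
    intro b
    induction b with
    | zero => exact h0
    | succ b ih => exact x_level_red hGBD x ih
  intro a
  induction a with
  | zero => intro b; simpa using hrow b
  | succ a ih =>
      intro b
      have := x_level_blue hGBD x (ih b)
      rwa [show ℓ0 + a + 1 = ℓ0 + (a + 1) by omega] at this

lemma x_FStep (x : InfPath G) (a b n : ℕ) :
    G.FStep (x.seg (a, b + 1) (a + n, b + 1)) (x.seg (a, b) (a + n, b)) := by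
  refine ⟨?_, ?_, x.seg (a, b) (a, b + 1), x.seg (a + n, b) (a + n, b + 1),
    x_red_edge x a b, x_red_edge x (a + n) b, ?_, ?_, ?_⟩
  · show (G.d _).2 = 0
    rw [seg_deg x (Nat.le_add_right a n) (le_refl (b + 1))]
    simp
  · show (G.d _).2 = 0
    rw [seg_deg x (Nat.le_add_right a n) (le_refl b)]
    simp
  · rw [x.source_seg _ _ (seg_le (le_refl a) (Nat.le_succ b)),
      x.range_seg _ _ (seg_le (Nat.le_add_right a n) (le_refl (b + 1)))]
  · rw [x.source_seg _ _ (seg_le (Nat.le_add_right a n) (le_refl b)),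
      x.range_seg _ _ (seg_le (le_refl (a + n)) (Nat.le_succ b))]
  · rw [x.comp_seg (a, b) (a, b + 1) (a + n, b + 1)
        (seg_le (le_refl a) (Nat.le_succ b)) (seg_le (Nat.le_add_right a n) (le_refl (b + 1))),
      x.comp_seg (a, b) (a + n, b) (a + n, b + 1)
        (seg_le (Nat.le_add_right a n) (le_refl b)) (seg_le (le_refl (a + n)) (Nat.le_succ b))]

lemma x_FIter (x : InfPath G) (a n : ℕ) :
    ∀ (b k : ℕ), G.FIter k (x.seg (a, b + k) (a + n, b + k)) (x.seg (a, b) (a + n, b))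
  | b, 0 => rfl
  | b, k + 1 => ⟨x.seg (a, b + k) (a + n, b + k), x_FStep x a (b + k) n, x_FIter x a n b k⟩

end TwoGraph

open TwoGraph in
lemma aux_main14 (G : TwoGraph) (V : ℕ → Set G.Path) (hGBD : IsGBD G ⊤ V)
    (x : InfPath G)
    (hord : ∀ L : ℕ, ∃ M : ℕ, ∀ n : ℕ, M ≤ n →
      ∀ k, G.HasOrder (x.seg 0 (n, 0)) k → L < k)
    (p1 p2 q2 : ℕ)
    (hper : ∀ m n : ℕ × ℕ, m ≤ n →
      x.seg (m + (p1, p2)) (n + (p1, p2)) = x.seg (m + (p1, q2)) (n + (p1, q2)))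
    (h2 : p2 < q2) : False := by
  classical
  set r : ℕ := q2 - p2 with hrdef
  have hr : 0 < r := by omega
  obtain ⟨ℓ0, h0⟩ := hGBD.cover (x.seg 0 0) (seg_vertex x 0)
  set w : G.Path := x.seg (p1, 0) (p1, 0) with hwdef
  have hwv : w ∈ V (ℓ0 + p1) := x_level hGBD x h0 p1 0
  set H : Set G.Path := {δ | G.d δ = (p1, 0) ∧ G.s δ = w} with hHdef
  have Hfin : H.Finite := by
    apply Set.Finite.subset ((hGBD.level_finite ℓ0).biUnion
      (fun v hv => hGBD.rowFinite v (p1, 0) (hGBD.level_vertex ℓ0 hv)))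
    rintro δ ⟨hdδ, hsδ⟩
    obtain ⟨m, hm⟩ := hGBD.cover (G.r δ) (isVertex_r' δ)
    have hsl : G.s δ ∈ V (m + p1) := blue_source_level hGBD p1 δ m hdδ hm
    rw [hsδ] at hsl
    have hml : m + p1 = ℓ0 + p1 := level_unique hGBD hsl hwv
    have hm' : G.r δ ∈ V ℓ0 := by
      have : m = ℓ0 := by omega
      rwa [this] at hm
    exact Set.mem_biUnion hm' ⟨rfl, hdδ⟩
  set scard : ℕ := Hfin.toFinset.card with hscard
  obtain ⟨M, hM⟩ := hord (scard * r)
  -- set up the paths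
  set γ : G.Path := x.seg (p1, 0) (p1 + M, 0) with hγdef
  set δ0 : G.Path := x.seg (0, 0) (p1, 0) with hδ0def
  set α : G.Path := x.seg (0, 0) (p1 + M, 0) with hαdef
  set β : G.Path := x.seg (p1, p2) (p1 + M, p2) with hβdef
  have hbγ : G.IsBlue γ := by
    show (G.d _).2 = 0
    rw [seg_deg x (Nat.le_add_right p1 M) (le_refl 0)]
  have hbδ0 : G.IsBlue δ0 := by
    show (G.d _).2 = 0
    rw [seg_deg x (Nat.zero_le p1) (le_refl 0)]
  have hbα : G.IsBlue α := by
    show (G.d _).2 = 0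
    rw [seg_deg x (Nat.zero_le _) (le_refl 0)]
  have hδ0d : G.d δ0 = (p1, 0) := by
    rw [hδ0def, seg_deg x (Nat.zero_le p1) (le_refl 0)]
    exact Prod.ext (Nat.sub_zero p1) rfl
  have hrγ : G.r γ = w := x.range_seg (p1, 0) (p1 + M, 0)
    (seg_le (Nat.le_add_right p1 M) (le_refl 0))
  have hsδ0 : G.s δ0 = G.r γ := by
    rw [hrγ, hδ0def, hwdef]
    exact x.source_seg (0, 0) (p1, 0) (seg_le (Nat.zero_le p1) (le_refl 0))
  have hαcomp : G.comp δ0 γ = α :=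
    x.comp_seg (0, 0) (p1, 0) (p1 + M, 0) (seg_le (Nat.zero_le p1) (le_refl 0))
      (seg_le (Nat.le_add_right p1 M) (le_refl 0))
  -- periodicity gives F^r fixes β
  have hper0 := hper (0, 0) (M, 0) (seg_le (Nat.zero_le M) (le_refl 0))
  simp only [Prod.mk_add_mk, Nat.zero_add] at hper0
  rw [Nat.add_comm M p1] at hper0
  have hq2 : p2 + r = q2 := by omega
  have hβeq : x.seg (p1, p2 + r) (p1 + M, p2 + r) = β := by
    rw [hq2]; exact hper0.symm
  have hFβ : G.FIter r β β := by
    have h := x_FIter x p1 M p2 r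
    rwa [hβeq] at h
  have hchain2 : G.FIter p2 β γ := by
    have h := x_FIter x p1 M 0 p2
    simpa only [Nat.zero_add] using h
  have hFγ : G.FIter r γ γ := by
    have hcomb : G.FIter (r + p2) β γ := FIter_comp r hFβ hchain2
    rw [Nat.add_comm] at hcomb
    obtain ⟨mid, hm1, hm2⟩ := FIter_split p2 hcomb
    rwa [FIter_det hGBD p2 hm1 hchain2] at hm2
  -- the sequence of heads
  have hchoice : ∀ i : ℕ, ∃ δ', (G.d δ' = (p1, 0) ∧ G.s δ' = w) ∧
      G.FIter (i * r) α (G.comp δ' γ) := by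
    intro i
    obtain ⟨ρ, hbρ, hiρ⟩ := FIter_total hGBD hbα (i * r)
    have hiρ' := hiρ
    rw [← hαcomp] at hiρ'
    obtain ⟨δ', γ', hd', hs', hρeq, hγ'⟩ := FIter_tail hGBD (i * r) hbδ0 hbγ hsδ0 hiρ'
    have hγγ : γ' = γ := FIter_det hGBD (i * r) hγ' (FIter_mul hFγ i)
    rw [hγγ] at hs' hρeq
    refine ⟨δ', ⟨hd'.trans hδ0d, hs'.trans hrγ⟩, ?_⟩
    rw [← hρeq]; exact hiρ
  choose g hg1 hg2 using hchoice
  -- pigeonhole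
  have hmaps : ∀ i ∈ Finset.range (scard + 1), g i ∈ Hfin.toFinset := by
    intro i _
    rw [Set.Finite.mem_toFinset]
    exact hg1 i
  have hcard : Hfin.toFinset.card < (Finset.range (scard + 1)).card := by simp; exact hscard.symm.le
  obtain ⟨i, hi, j, hj, hij, hgij⟩ :=
    Finset.exists_ne_map_eq_of_card_lt_of_maps_to hcard hmaps
  rw [Finset.mem_range] at hi hj
  -- a key step, symmetric in i and j
  have key : ∀ i j : ℕ, i < j → j ≤ scard → g i = g j →
      ∃ K, 0 < K ∧ K ≤ scard * r ∧ G.FIter K α α := by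
    intro i j hlt hjle hgeq
    have hKdef : j * r = i * r + (j - i) * r := by
      rw [← Nat.add_mul, Nat.add_sub_cancel' (le_of_lt hlt)]
    have hj' := hg2 j
    rw [hKdef] at hj'
    obtain ⟨mid, hm1, hm2⟩ := FIter_split (i * r) hj'
    rw [FIter_det hGBD (i * r) hm1 (hg2 i), ← hgeq] at hm2
    -- hm2 : FIter ((j-i)*r) (comp (g i) γ) (comp (g i) γ)
    obtain ⟨β', hbβ', hKαβ'⟩ := FIter_total hGBD hbα ((j - i) * r)
    obtain ⟨c', hbc', hic'⟩ := FIter_total hGBD hbβ' (i * r)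
    have hA : G.FIter ((j - i) * r + i * r) α c' := FIter_comp _ hKαβ' hic'
    rw [Nat.add_comm] at hA
    have hB : G.FIter (i * r + (j - i) * r) α (G.comp (g i) γ) :=
      FIter_comp _ (hg2 i) hm2
    have hc'eq : c' = G.comp (g i) γ := FIter_det hGBD _ hA hB
    rw [hc'eq] at hic'
    have hβ'α : β' = α := FIter_inj hGBD (i * r) hic' (hg2 i)
    rw [hβ'α] at hKαβ'
    refine ⟨(j - i) * r, Nat.mul_pos (by omega) hr, ?_, hKαβ'⟩
    exact Nat.mul_le_mul_right r (by omega)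
  have hKex : ∃ K, 0 < K ∧ K ≤ scard * r ∧ G.FIter K α α := by
    rcases Nat.lt_or_ge i j with h | h
    · exact key i j h (by omega) hgij
    · exact key j i (by omega) (by omega) hgij.symm
  obtain ⟨K, hK0, hKle, hKiter⟩ := hKex
  have hex : ∃ m, 0 < m ∧ G.FIter m α α := ⟨K, hK0, hKiter⟩
  have hkspec := Nat.find_spec hex
  have hkle : Nat.find hex ≤ K := Nat.find_min' hex ⟨hK0, hKiter⟩
  have hord' : G.HasOrder α (Nat.find hex) :=
    ⟨hkspec.1, hkspec.2, fun m hm0 hmk hF => Nat.find_min hex hmk ⟨hm0, hF⟩⟩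
  have hlt := hM (p1 + M) (Nat.le_add_left M p1) (Nat.find hex) hord'
  omega

end AuxStmt14

/-- If `o(x(0, n e₁)) → ∞` then the infinite path `x` is aperiodic. -/
theorem stmt14 (G : TwoGraph) (V : ℕ → Set G.Path) (hGBD : IsGBD G ⊤ V)
    (x : InfPath G)
    (hord : ∀ L : ℕ, ∃ M : ℕ, ∀ n : ℕ, M ≤ n →
      ∀ k, G.HasOrder (x.seg 0 (n, 0)) k → L < k) :
    ∀ p q : ℕ × ℕ,
      (∀ m n : ℕ × ℕ, m ≤ n → x.seg (m + p) (n + p) = x.seg (m + q) (n + q)) →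
      p = q := by
  intro p q hper
  obtain ⟨ℓ0, h0⟩ := hGBD.cover (x.seg 0 0) (TwoGraph.seg_vertex x 0)
  have hseg : x.seg p p = x.seg q q := by
    have h := hper 0 0 le_rfl
    simpa using h
  have hp := TwoGraph.x_level hGBD x h0 p.1 p.2
  have hq := TwoGraph.x_level hGBD x h0 q.1 q.2
  rw [Prod.mk.eta] at hp hq
  rw [hseg] at hp
  have hpq1 : p.1 = q.1 := by
    have := TwoGraph.level_unique hGBD hp hq
    omega
  rcases Nat.lt_trichotomy p.2 q.2 with h | h | h
  · have hqmk : q = (p.1, q.2) := Prod.ext hpq1.symm rfl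
    exact (aux_main14 G V hGBD x hord p.1 p.2 q.2
      (fun m n hmn => by have h' := hper m n hmn; rwa [hqmk] at h') h).elim
  · exact Prod.ext hpq1 h
  · have hpmk : p = (q.1, p.2) := Prod.ext hpq1 rfl
    exact (aux_main14 G V hGBD x hord q.1 q.2 p.2
      (fun m n hmn => by have h' := (hper m n hmn).symm; rwa [hpmk] at h') h).elim
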